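/- For the regular icosahedral coordination geometry whose 12 bonds are the normalized cyclic permutations of (0, ±1, ±φ) with φ the golden ratio, the set of inner products ⟨b, b'⟩ over distinct bond pairs equals {1/√5, −1/√5, −1}; hence m = 3, n = 66, and E = log₂ 22. -/

import Mathlib

open scoped RealInnerProductSpace

noncomputable def v3 (a b c : ℝ) : EuclideanSpace ℝ (Fin 3) := (WithLp.equiv 2 _).symm ![a, b, c]

/-- The golden ratio. -/
noncomputable def φ : ℝ := (1 + Real.sqrt 5) / 2

/-- A normalized icosahedral bond `(a,b,c)/√(1+φ²)`. -/
noncomputable def icov (a b c : ℝ) : EuclideanSpace ℝ (Fin 3) :=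
  (Real.sqrt (1 + φ ^ 2))⁻¹ • v3 a b c

/-- The regular icosahedral coordination geometry: the 12 normalized cyclic permutations
of `(0, ±1, ±φ)`. -/
noncomputable def icoS : Set (EuclideanSpace ℝ (Fin 3)) :=
  {icov 0 1 φ, icov 0 1 (-φ), icov 0 (-1) φ, icov 0 (-1) (-φ),
   icov 1 φ 0, icov 1 (-φ) 0, icov (-1) φ 0, icov (-1) (-φ) 0,
   icov φ 0 1, icov (-φ) 0 1, icov φ 0 (-1), icov (-φ) 0 (-1)}

/-- Set of bond angles of a coordination geometry. -/
def angleSet (S : Set (EuclideanSpace ℝ (Fin 3))) : Set ℝ :=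
  {θ | ∃ b ∈ S, ∃ b' ∈ S, b ≠ b' ∧ θ = Real.arccos ⟪b, b'⟫}

lemma phi_sq : φ ^ 2 = φ + 1 := by
  have h5 : Real.sqrt 5 ^ 2 = 5 := Real.sq_sqrt (by norm_num)
  unfold φ; nlinarith [h5]

lemma inner_icov (a b c a' b' c' : ℝ) :
    ⟪icov a b c, icov a' b' c'⟫ = (a*a' + b*b' + c*c') / (1 + φ^2) := by
  have h : (0:ℝ) < 1 + φ^2 := by positivity
  simp only [icov, v3, inner_smul_left, inner_smul_right, PiLp.inner_apply,
    WithLp.equiv_symm_apply, WithLp.ofLp_toLp, RCLike.inner_apply, conj_trivial, map_inv₀,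
    Fin.sum_univ_three, Matrix.cons_val_zero, Matrix.cons_val_one, Matrix.head_cons,
    Matrix.cons_val_two, Matrix.tail_cons]
  have hs := Real.mul_self_sqrt h.le
  set s := Real.sqrt (1 + φ^2) with hsdef
  rw [← hs]; ring

lemma one_phi_pos : (0:ℝ) < 1 + φ^2 := by positivity

lemma sqrt5_pos : (0:ℝ) < Real.sqrt 5 := Real.sqrt_pos.mpr (by norm_num)

lemma val_pos : φ / (1 + φ^2) = (Real.sqrt 5)⁻¹ := by
  have h5 : Real.sqrt 5 ^ 2 = 5 := Real.sq_sqrt (by norm_num)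
  have h := one_phi_pos
  have hs := sqrt5_pos
  rw [div_eq_iff (ne_of_gt h), eq_comm, inv_mul_eq_div, div_eq_iff (ne_of_gt hs)]
  unfold φ; nlinarith [h5]

lemma val_neg : -φ / (1 + φ^2) = -(Real.sqrt 5)⁻¹ := by
  rw [neg_div, val_pos]

lemma val_one : -(1 + φ^2) / (1 + φ^2) = -1 := by
  rw [neg_div, div_self (ne_of_gt one_phi_pos)]

lemma ne_of_inner' {b b' : EuclideanSpace ℝ (Fin 3)} (h : ⟪b,b⟫ ≠ ⟪b,b'⟫) : b ≠ b' :=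
  fun e => h (by rw [← e])

lemma sqrt5_gt_one : (1:ℝ) < Real.sqrt 5 := by
  nlinarith [Real.sq_sqrt (by norm_num : (0:ℝ) ≤ 5), sqrt5_pos]

lemma inv_sqrt5_lt_one : (Real.sqrt 5)⁻¹ < 1 := inv_lt_one_of_one_lt₀ sqrt5_gt_one

lemma inv_sqrt5_pos : (0:ℝ) < (Real.sqrt 5)⁻¹ := by positivity

/-- The inner products over distinct icosahedral bond pairs are exactly
`{1/√5, −1/√5, −1}`; hence `m = 3`, `n = 66`, and `E = log₂ 22`. -/
theorem icosahedral_angles :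
    {x : ℝ | ∃ b ∈ icoS, ∃ b' ∈ icoS, b ≠ b' ∧ x = ⟪b, b'⟫} =
      {(Real.sqrt 5)⁻¹, -(Real.sqrt 5)⁻¹, -1} ∧
    (angleSet icoS).ncard = 3 ∧
    Real.logb 2 66 - Real.logb 2 ((angleSet icoS).ncard) = Real.logb 2 22 := by
  have hself : (0*0+1*1+φ*φ:ℝ)/(1+φ^2) = 1 := by
    rw [div_eq_one_iff_eq (ne_of_gt one_phi_pos)]; ring
  have hfirst : {x : ℝ | ∃ b ∈ icoS, ∃ b' ∈ icoS, b ≠ b' ∧ x = ⟪b, b'⟫} =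
      {(Real.sqrt 5)⁻¹, -(Real.sqrt 5)⁻¹, -1} := by
    ext x
    constructor
    · rintro ⟨b, hb, b', hb', hne, rfl⟩
      simp only [icoS, Set.mem_insert_iff, Set.mem_singleton_iff] at hb hb'
      simp only [Set.mem_insert_iff, Set.mem_singleton_iff]
      rcases hb with rfl|rfl|rfl|rfl|rfl|rfl|rfl|rfl|rfl|rfl|rfl|rfl <;>
        rcases hb' with rfl|rfl|rfl|rfl|rfl|rfl|rfl|rfl|rfl|rfl|rfl|rfl <;>
        rw [inner_icov] <;>
        first
        | exact absurd rfl hne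
        | (left; rw [← val_pos]; congr 1; first | ring1 | linear_combination phi_sq | linear_combination -phi_sq)
        | (right; left; rw [← val_neg]; congr 1; first | ring1 | linear_combination phi_sq | linear_combination -phi_sq)
        | (right; right; rw [div_eq_iff (ne_of_gt one_phi_pos)]; ring1)
    · simp only [Set.mem_insert_iff, Set.mem_singleton_iff]
      rintro (rfl|rfl|rfl)
      · refine ⟨icov 0 1 φ, by simp [icoS], icov 0 (-1) φ, by simp [icoS], ?_, ?_⟩
        · refine ne_of_inner' ?_
          rw [inner_icov, inner_icov, hself]
          have e2 : (0*0+1*(-1)+φ*φ:ℝ)/(1+φ^2) = (Real.sqrt 5)⁻¹ := by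
            rw [← val_pos]; congr 1; linear_combination phi_sq
          rw [e2]; exact ne_of_gt inv_sqrt5_lt_one
        · rw [inner_icov, ← val_pos]; congr 1; linear_combination -phi_sq
      · refine ⟨icov 0 1 φ, by simp [icoS], icov 0 1 (-φ), by simp [icoS], ?_, ?_⟩
        · refine ne_of_inner' ?_
          rw [inner_icov, inner_icov, hself]
          have e2 : (0*0+1*1+φ*(-φ):ℝ)/(1+φ^2) = -(Real.sqrt 5)⁻¹ := by
            rw [← val_neg]; congr 1; linear_combination -phi_sq
          rw [e2]; exact ne_of_gt (by linarith [inv_sqrt5_pos])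
        · rw [inner_icov, ← val_neg]; congr 1; linear_combination phi_sq
      · refine ⟨icov 0 1 φ, by simp [icoS], icov 0 (-1) (-φ), by simp [icoS], ?_, ?_⟩
        · refine ne_of_inner' ?_
          rw [inner_icov, inner_icov, hself]
          have e2 : (0*0+1*(-1)+φ*(-φ):ℝ)/(1+φ^2) = -1 := by
            rw [div_eq_iff (ne_of_gt one_phi_pos)]; ring
          rw [e2]; norm_num
        · rw [inner_icov, eq_div_iff (ne_of_gt one_phi_pos)]; ring
  have himg : angleSet icoS =
      Real.arccos '' {x : ℝ | ∃ b ∈ icoS, ∃ b' ∈ icoS, b ≠ b' ∧ x = ⟪b, b'⟫} := by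
    ext θ
    constructor
    · rintro ⟨b, hb, b', hb', hne, rfl⟩
      exact ⟨_, ⟨b, hb, b', hb', hne, rfl⟩, rfl⟩
    · rintro ⟨x, ⟨b, hb, b', hb', hne, rfl⟩, rfl⟩
      exact ⟨b, hb, b', hb', hne, rfl⟩
  have hA0 : (Real.sqrt 5)⁻¹ ≤ 1 := inv_sqrt5_lt_one.le
  have hA1 : -(1:ℝ) ≤ (Real.sqrt 5)⁻¹ := by linarith [inv_sqrt5_pos]
  have hangle : angleSet icoS =
      {Real.arccos ((Real.sqrt 5)⁻¹), Real.arccos (-(Real.sqrt 5)⁻¹), Real.arccos (-1)} := by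
    rw [himg, hfirst, Set.image_insert_eq, Set.image_insert_eq, Set.image_singleton]
  have hcard : (angleSet icoS).ncard = 3 := by
    rw [hangle]
    rw [Set.ncard_insert_of_notMem, Set.ncard_insert_of_notMem, Set.ncard_singleton]
    · simp only [Set.mem_singleton_iff]
      intro h
      have := congrArg Real.cos h
      have hp := inv_sqrt5_pos
      have hl := inv_sqrt5_lt_one
      rw [Real.cos_arccos (by linarith) (by linarith),
        Real.cos_arccos (by norm_num) (by norm_num)] at this
      linarith
    · simp only [Set.mem_insert_iff, Set.mem_singleton_iff]
      have hp := inv_sqrt5_pos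
      have hl := inv_sqrt5_lt_one
      rintro (h | h) <;> have := congrArg Real.cos h
      · rw [Real.cos_arccos hA1 hA0,
          Real.cos_arccos (by linarith) (by linarith)] at this
        linarith
      · rw [Real.cos_arccos hA1 hA0,
          Real.cos_arccos (by norm_num) (by norm_num)] at this
        linarith
  refine ⟨hfirst, hcard, ?_⟩
  rw [hcard]
  rw [show ((3:ℕ):ℝ) = 3 by norm_num, ← Real.logb_div (by norm_num) (by norm_num)]
  norm_num
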